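/- Let N be a positive integer, θ ∈ ℝᴺ, γ > 0, μ ∈ (0,1), t_IE > 0, and let Δ : ℝ → ℝ be continuous with ∫₀^{t_IE} Δ(s)² ds ≥ −(1/γ)·ln(1−μ). Let θ̂ : ℝ → ℝᴺ be differentiable with θ̂'(t) = −γ·Δ(t)·(Δ(t)·θ̂(t) − Δ(t)·θ) for all t ≥ 0. Define w(t) := exp(−γ·∫₀ᵗ Δ(s)² ds), the clipped weight w_c(t) := if w(t) ≤ 1−μ then w(t) else 1−μ, and the fixed-convergence-time estimate θ^{FCT}(t) := (1/(1 − w_c(t)))·(θ̂(t) − w_c(t)·θ̂(0)). Then θ^{FCT}(t) = θ for all t ≥ t_IE. -/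

import Mathlib

/-- Fixed-time parameter identification: the clipped FCT estimate
`θ^{FCT}(t) = (θ̂(t) − w_c(t) θ̂(0)) / (1 − w_c(t))` built from the gradient estimator
`θ̂' = −γ Δ (Δ θ̂ − Δ θ)` equals the true parameter `θ` for all `t ≥ t_IE`,
provided the interval-excitation condition `∫₀^{t_IE} Δ² ≥ −ln(1−μ)/γ` holds. -/
theorem fixed_time_parameter_identification
    (N : ℕ) (hN : 0 < N)
    (θ : Fin N → ℝ) (γ μ : ℝ) (hγ : 0 < γ) (hμ : μ ∈ Set.Ioo (0 : ℝ) 1)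
    (tIE : ℝ) (htIE : 0 < tIE)
    (Δ : ℝ → ℝ) (hΔ : Continuous Δ)
    (hIE : (∫ s in (0:ℝ)..tIE, (Δ s) ^ 2) ≥ -(1 / γ) * Real.log (1 - μ))
    (θhat : ℝ → Fin N → ℝ)
    (hθhat : ∀ t ≥ (0 : ℝ),
      HasDerivAt θhat (-(γ * Δ t) • (Δ t • θhat t - Δ t • θ)) t)
    (w wc : ℝ → ℝ)
    (hw : ∀ t, w t = Real.exp (-γ * ∫ s in (0:ℝ)..t, (Δ s) ^ 2))
    (hwc : ∀ t, wc t = if w t ≤ 1 - μ then w t else 1 - μ)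
    (θFCT : ℝ → Fin N → ℝ)
    (hθFCT : ∀ t, θFCT t = (1 / (1 - wc t)) • (θhat t - wc t • θhat 0)) :
    ∀ t ≥ tIE, θFCT t = θ := by
  intro t ht
  have ht0 : (0:ℝ) ≤ t := le_trans htIE.le ht
  have hΔ2 : Continuous fun s => (Δ s) ^ 2 := hΔ.pow 2
  set F : ℝ → ℝ := fun u => ∫ s in (0:ℝ)..u, (Δ s) ^ 2 with hFdef
  have hFderiv : ∀ u : ℝ, HasDerivAt F ((Δ u) ^ 2) u := by
    intro u
    exact intervalIntegral.integral_hasDerivAt_right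
      (hΔ2.intervalIntegrable 0 u)
      (hΔ2.stronglyMeasurableAtFilter _ _)
      hΔ2.continuousAt
  -- the function g u = exp(γ F u) • (θhat u − θ) has zero derivative on [0, ∞)
  set g : ℝ → Fin N → ℝ := fun u => Real.exp (γ * F u) • (θhat u - θ) with hgdef
  have hgderiv : ∀ u ∈ Set.Ici (0:ℝ), HasDerivAt g 0 u := by
    intro u hu
    have hexp : HasDerivAt (fun v => Real.exp (γ * F v))
        (Real.exp (γ * F u) * (γ * (Δ u) ^ 2)) u :=
      (((hFderiv u).const_mul γ)).exp
    have hsub : HasDerivAt (fun v => θhat v - θ)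
        (-(γ * Δ u) • (Δ u • θhat u - Δ u • θ)) u :=
      (hθhat u hu).sub_const θ
    have h := hexp.smul hsub
    refine HasDerivAt.congr_deriv h ?_
    rw [show Δ u • θhat u - Δ u • θ = Δ u • (θhat u - θ) from (smul_sub _ _ _).symm]
    match_scalars <;> ring
  have hgconst : g t = g 0 := by
    have := Convex.norm_image_sub_le_of_norm_hasDerivWithin_le
      (f := g) (f' := fun _ => 0) (C := 0) (s := Set.Ici (0:ℝ))
      (fun x hx => (hgderiv x hx).hasDerivWithinAt)
      (fun x _ => by simp) (convex_Ici 0) Set.self_mem_Ici ht0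
    have h0 : ‖g t - g 0‖ ≤ 0 := by simpa using this
    have := norm_eq_zero.mp (le_antisymm h0 (norm_nonneg _))
    exact sub_eq_zero.mp this
  have hF0 : F 0 = 0 := intervalIntegral.integral_same
  have hg0 : g 0 = θhat 0 - θ := by simp [hgdef, hF0]
  -- solution formula
  have hsol : θhat t - θ = w t • (θhat 0 - θ) := by
    have h1 : Real.exp (γ * F t) • (θhat t - θ) = θhat 0 - θ := by
      rw [← hg0]; exact hgconst
    have h2 : w t = Real.exp (-γ * F t) := hw t
    have := congrArg (fun x => Real.exp (-γ * F t) • x) h1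
    simpa [smul_smul, ← Real.exp_add, (by ring : -γ * F t + γ * F t = 0), h2] using this
  -- weight bound
  have hμ0 : 0 < 1 - μ := by linarith [hμ.2]
  have hFt : F t ≥ -(1 / γ) * Real.log (1 - μ) := by
    have hsplit : F t = F tIE + ∫ s in tIE..t, (Δ s) ^ 2 := by
      rw [hFdef]
      exact (intervalIntegral.integral_add_adjacent_intervals
        (hΔ2.intervalIntegrable 0 tIE) (hΔ2.intervalIntegrable tIE t)).symm
    have hnn : (0:ℝ) ≤ ∫ s in tIE..t, (Δ s) ^ 2 :=
      intervalIntegral.integral_nonneg ht (fun s _ => sq_nonneg _)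
    calc F t = F tIE + ∫ s in tIE..t, (Δ s) ^ 2 := hsplit
      _ ≥ F tIE := by linarith
      _ ≥ -(1 / γ) * Real.log (1 - μ) := hIE
  have hwt : w t ≤ 1 - μ := by
    rw [hw t, ← Real.exp_log hμ0]
    apply Real.exp_le_exp.mpr
    have h1 : γ * (-(1 / γ) * Real.log (1 - μ)) ≤ γ * F t :=
      mul_le_mul_of_nonneg_left hFt hγ.le
    have h2 : γ * (-(1 / γ) * Real.log (1 - μ)) = -Real.log (1 - μ) := by
      field_simp
    linarith
  have hwc_t : wc t = w t := by rw [hwc t, if_pos hwt]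
  have hne : 1 - w t ≠ 0 := by
    have : w t < 1 := lt_of_le_of_lt hwt (by linarith [hμ.1])
    linarith
  -- final algebra
  rw [hθFCT t, hwc_t]
  have hθt : θhat t = θ + w t • (θhat 0 - θ) := by
    have := hsol; linear_combination (norm := module) this
  rw [hθt]
  have key : θ + w t • (θhat 0 - θ) - w t • θhat 0 = (1 - w t) • θ := by
    module
  rw [key, smul_smul, one_div, inv_mul_cancel₀ hne, one_smul]
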